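/- Let F be a cellular automaton and u a word of length n. Suppose all space-time diagrams generated by periodic initial configurations of the form (uv)^ℤ with |v| = n² have identical eventually-periodic parts. Then the consequences of u are eventually spatially uniform: there is T such that for every t ≥ T, all sites ⟨y,t⟩ in Cons_F([u]_0) carry the same state (for all configurations in [u]_0). -/

import Mathlib

open Classical

section Prelude

variable {A : Type*}

/-- The shift map on configurations. -/
def shift (x : ℤ → A) : ℤ → A := fun i => x (i + 1)

/-- The cylinder of the word `u` placed at position `p`. -/
def cylAt (u : List A) (p : ℤ) : Set (ℤ → A) :=
  {x | ∀ i : Fin u.length, x (p + ((i : ℕ) : ℤ)) = u.get i}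

/-- The region of consequences of a set of configurations. -/
def consSet (F : (ℤ → A) → (ℤ → A)) (X : Set (ℤ → A)) : Set (ℤ × ℕ) :=
  {q | ∀ x ∈ X, ∀ y ∈ X, F^[q.2] x q.1 = F^[q.2] y q.1}

/-- `F` is a cellular automaton with neighborhood `⟦r,s⟧`. -/
def IsCA (F : (ℤ → A) → (ℤ → A)) (r s : ℤ) : Prop :=
  (∀ x, F (shift x) = shift (F x)) ∧
  (∀ x y : ℤ → A, (∀ i : ℤ, r ≤ i → i ≤ s → x i = y i) → F x 0 = F y 0)

/-- A subshift: a closed shift-invariant set. -/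
def IsSubshift [TopologicalSpace A] (S : Set (ℤ → A)) : Prop :=
  IsClosed S ∧ shift '' S = S

/-- Two configurations agree on the centered window of radius `m`
(Cantor distance `< 2^{-m}`). -/
def close (m : ℕ) (x y : ℤ → A) : Prop := ∀ i : ℤ, |i| ≤ (m : ℤ) → x i = y i

/-- `y` is in the tube of radius `2^{-k}` along `h` around `x`:
for every time `n` the configurations `σ^{h n} ∘ F^n (x)` and `σ^{h n} ∘ F^n (y)`
agree on the window of radius `k`. -/
def tube (F : (ℤ → A) → (ℤ → A)) (h : ℕ → ℤ) (k : ℕ) (x y : ℤ → A) : Prop :=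
  ∀ n : ℕ, ∀ i : ℤ, |i| ≤ (k : ℤ) → F^[n] x (i + h n) = F^[n] y (i + h n)

/-- `x` is an equicontinuous point along `h` relative to `S`. -/
def eqPt (F : (ℤ → A) → (ℤ → A)) (S : Set (ℤ → A)) (h : ℕ → ℤ) (x : ℤ → A) : Prop :=
  ∀ k : ℕ, ∃ m : ℕ, ∀ y ∈ S, close m x y → tube F h k x y

/-- `F` is sensitive along `h` relative to `S`. -/
def sensitive (F : (ℤ → A) → (ℤ → A)) (S : Set (ℤ → A)) (h : ℕ → ℤ) : Prop :=
  ∃ k : ℕ, ∀ m : ℕ, ∀ x ∈ S, ∃ y ∈ S, close m x y ∧ ¬ tube F h k x y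

/-- `F` is right-expansive along `h` relative to `S`. -/
def rightExpansive (F : (ℤ → A) → (ℤ → A)) (S : Set (ℤ → A)) (h : ℕ → ℤ) : Prop :=
  ∃ k : ℕ, ∀ x ∈ S, ∀ y ∈ S, (∃ i : ℤ, 0 ≤ i ∧ x i ≠ y i) →
    ∀ z ∈ S, ¬ (tube F h k x z ∧ tube F h k y z)

/-- `F` is left-expansive along `h` relative to `S`. -/
def leftExpansive (F : (ℤ → A) → (ℤ → A)) (S : Set (ℤ → A)) (h : ℕ → ℤ) : Prop :=
  ∃ k : ℕ, ∀ x ∈ S, ∀ y ∈ S, (∃ i : ℤ, i ≤ 0 ∧ x i ≠ y i) →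
    ∀ z ∈ S, ¬ (tube F h k x z ∧ tube F h k y z)

/-- Curves with bounded variation. -/
def BV (h : ℕ → ℤ) : Prop := ∃ M : ℤ, 0 < M ∧ ∀ n : ℕ, |h (n + 1) - h n| ≤ M

/-- The preorder `h ≾ k` on curves. -/
def precsim (h k : ℕ → ℤ) : Prop := ∃ M : ℤ, 0 < M ∧ ∀ n : ℕ, h n ≤ k n + M

/-- The equivalence `h ∼ k` on curves. -/
def simEq (h k : ℕ → ℤ) : Prop := ∃ M : ℤ, 0 < M ∧ ∀ n : ℕ, k n - M ≤ h n ∧ h n ≤ k n + M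

/-- The word `u` belongs to the language of `S`. -/
def inLang (S : Set (ℤ → A)) (u : List A) : Prop := ∃ x ∈ S, x ∈ cylAt u 0

/-- Transitivity of a subshift, expressed on its language. -/
def transitiveSubshift (S : Set (ℤ → A)) : Prop :=
  ∀ u v : List A, inLang S u → inLang S v → ∃ w : List A, inLang S (u ++ w ++ v)

/-- `u` is a blocking word along `h` for the CA `F` of neighborhood `⟦r,s⟧`,
relative to the subshift `S`. -/
def blockingWord (F : (ℤ → A) → (ℤ → A)) (S : Set (ℤ → A)) (h : ℕ → ℤ) (r s : ℤ)
    (u : List A) : Prop :=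
  inLang S u ∧
  ∃ e : ℕ, 0 < e ∧
    (∀ n : ℕ, |h (n + 1) - h n| + s < (e : ℤ) ∧ |h (n + 1) - h n| - r < (e : ℤ)) ∧
    (e : ℤ) ≤ u.length ∧
    ∃ p : ℤ, {q : ℤ × ℕ | h q.2 ≤ q.1 ∧ q.1 < h q.2 + (e : ℤ)} ⊆ consSet F (S ∩ cylAt u p)

end Prelude
/-- The spatially periodic configuration `u^ℤ`. -/
def perConf {A : Type*} [Inhabited A] (u : List A) : ℤ → A :=
  fun i => u.getD (i % (u.length : ℤ)).toNat default

section Aux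

variable {A : Type*}

lemma shift_iter (x : ℤ → A) (p : ℕ) (i : ℤ) : shift^[p] x i = x (i + p) := by
  induction p generalizing x i with
  | zero => simp
  | succ p ih =>
    rw [Function.iterate_succ_apply, ih]
    show x (i + p + 1) = _
    congr 1
    push_cast
    ring

lemma F_shift_comm (F : (ℤ → A) → ℤ → A) (hF : ∀ x, F (shift x) = shift (F x))
    (p : ℕ) (x : ℤ → A) : F (shift^[p] x) = shift^[p] (F x) := by
  induction p generalizing x with
  | zero => simp
  | succ p ih =>
    rw [Function.iterate_succ_apply, ih, hF, ← Function.iterate_succ_apply]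

lemma iter_shift_comm (F : (ℤ → A) → ℤ → A) (hF : ∀ x, F (shift x) = shift (F x))
    (t p : ℕ) (x : ℤ → A) : F^[t] (shift^[p] x) = shift^[p] (F^[t] x) := by
  induction t with
  | zero => simp
  | succ t ih =>
    rw [Function.iterate_succ_apply', Function.iterate_succ_apply', ih,
      F_shift_comm F hF p]

lemma iter_periodic (F : (ℤ → A) → ℤ → A) (hF : ∀ x, F (shift x) = shift (F x))
    (t p : ℕ) (x : ℤ → A) (hx : ∀ i, x (i + p) = x i) :
    ∀ i, F^[t] x (i + p) = F^[t] x i := by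
  have hx' : shift^[p] x = x := funext fun i => (shift_iter x p i).trans (hx i)
  intro i
  have h := congrFun (iter_shift_comm F hF t p x) i
  rw [hx', shift_iter] at h
  exact h.symm

lemma getD_flatten_replicate (u : List A) (m k : ℕ) (hk : k < m * u.length) (d : A) :
    (List.flatten (List.replicate m u)).getD k d = u.getD (k % u.length) d := by
  induction m generalizing k with
  | zero => simp at hk
  | succ m ih =>
    rw [List.replicate_succ, List.flatten_cons]
    by_cases h : k < u.length
    · rw [List.getD_append _ _ _ _ h, Nat.mod_eq_of_lt h]
    · push_neg at h
      rw [List.getD_append_right _ _ _ _ h, ih (k - u.length) (by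
        rw [Nat.succ_mul] at hk
        omega)]
      congr 1
      conv_rhs => rw [Nat.mod_eq_sub_mod h]

lemma perConf_flatten [Inhabited A] (u : List A) (hu : u ≠ []) (m : ℕ) (hm : 0 < m) :
    perConf (List.flatten (List.replicate m u)) = perConf u := by
  have hn : 0 < u.length := List.length_pos_iff.mpr hu
  have hlen : (List.flatten (List.replicate m u)).length = m * u.length := by
    simp [List.length_flatten, List.map_replicate, mul_comm]
  funext i
  unfold perConf
  rw [hlen]
  have hL : (0 : ℤ) < (m * u.length : ℕ) := by positivity
  have h0 : (0:ℤ) ≤ i % (m * u.length : ℕ) := Int.emod_nonneg _ (by omega)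
  have h1 : i % (m * u.length : ℕ) < (m * u.length : ℕ) := Int.emod_lt_of_pos _ hL
  set k : ℕ := (i % (m * u.length : ℕ)).toNat with hk
  have hkZ : (k : ℤ) = i % (m * u.length : ℕ) := Int.toNat_of_nonneg h0
  have hklt : k < m * u.length := by omega
  rw [getD_flatten_replicate u m k hklt]
  congr 1
  have hdvd : ((u.length : ℤ)) ∣ ((m * u.length : ℕ) : ℤ) := by
    push_cast; exact dvd_mul_left _ _
  have : ((k % u.length : ℕ) : ℤ) = i % u.length := by
    push_cast
    rw [hkZ, Int.emod_emod_of_dvd _ hdvd]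
  omega

lemma perConf_periodic [Inhabited A] (u : List A) (i : ℤ) :
    perConf u (i + u.length) = perConf u i := by
  unfold perConf
  congr 2
  simp

lemma perConf_mem_cyl [Inhabited A] (u : List A) : perConf u ∈ cylAt u 0 := by
  intro i
  have hi : (i : ℕ) < u.length := i.2
  show perConf u (0 + (i : ℕ)) = _
  rw [zero_add]
  unfold perConf
  have : ((i : ℕ) : ℤ) % (u.length : ℤ) = (i : ℕ) := by
    apply Int.emod_eq_of_lt <;> omega
  rw [this]
  simp [List.getD_eq_getElem _ _ hi, List.get_eq_getElem]

end Aux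

/-- if all space-time diagrams of the periodic configurations
`(uv)^ℤ`, `|v| = n²`, have identical eventually-periodic parts, then the
consequences of `u` are eventually spatially uniform. -/
theorem stmt13 {A : Type*} [Fintype A] [Inhabited A]
    (F : (ℤ → A) → (ℤ → A)) (r s : ℤ) (hF : IsCA F r s)
    (u : List A) (hu : u ≠ [])
    (hyp : ∃ T₀ : ℕ, ∀ v w : List A,
      v.length = u.length ^ 2 → w.length = u.length ^ 2 →
      ∀ t : ℕ, T₀ ≤ t → F^[t] (perConf (u ++ v)) = F^[t] (perConf (u ++ w))) :
    ∃ T : ℕ, ∀ t : ℕ, T ≤ t → ∃ a : A, ∀ c ∈ cylAt u 0, ∀ y : ℤ,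
      (y, t) ∈ consSet F (cylAt u 0) → F^[t] c y = a := by
  obtain ⟨T₀, hT⟩ := hyp
  set n := u.length with hn
  have hnpos : 0 < n := List.length_pos_iff.mpr hu
  obtain ⟨m, hm⟩ : ∃ m, n = m + 1 := ⟨n - 1, by omega⟩
  set v₁ : List A := List.flatten (List.replicate n u) with hv₁
  set b : List A := u ++ [default] with hb
  have hbne : b ≠ [] := by simp [hb]
  have hblen : b.length = n + 1 := by simp [hb, hn]
  set v₂ : List A := [default] ++ List.flatten (List.replicate m b) with hv₂
  have hlen1 : v₁.length = n ^ 2 := by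
    simp [hv₁, List.length_flatten, List.map_replicate]
    ring
  have hlen2 : v₂.length = n ^ 2 := by
    simp [hv₂, List.length_flatten, List.map_replicate, hblen, hm]
    ring
  have he1 : u ++ v₁ = List.flatten (List.replicate (n + 1) u) := by
    rw [hv₁, List.replicate_succ, List.flatten_cons]
  have he2 : u ++ v₂ = List.flatten (List.replicate (m + 1) b) := by
    rw [hv₂, List.replicate_succ, List.flatten_cons, hb]
    simp
  refine ⟨T₀, fun t ht => ?_⟩
  have heq := hT v₁ v₂ hlen1 hlen2 t ht
  rw [he1, he2, perConf_flatten u hu (n + 1) (by omega),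
    perConf_flatten b hbne (m + 1) (by omega)] at heq
  set g : ℤ → A := F^[t] (perConf u) with hg
  have hper1 : ∀ i : ℤ, g (i + n) = g i :=
    iter_periodic F hF.1 t n (perConf u) (perConf_periodic u)
  have hper2 : ∀ i : ℤ, g (i + (n + 1)) = g i := by
    intro i
    have := iter_periodic F hF.1 t b.length (perConf b) (perConf_periodic b) i
    rw [← heq] at this
    rw [hg]
    convert this using 3
    rw [hblen]
    push_cast
    ring
  have hstep : ∀ i : ℤ, g (i + 1) = g i := by
    intro i
    have h1 : g (i + 1 + n) = g (i + 1) := hper1 (i + 1)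
    have h2 : g (i + (n + 1)) = g i := hper2 i
    have : i + 1 + (n : ℤ) = i + ((n : ℤ) + 1) := by ring
    rw [this] at h1
    rw [← h1, h2]
  have hconst : ∀ y : ℤ, g y = g 0 := by
    intro y
    induction y using Int.induction_on with
    | zero => rfl
    | succ k ih => rw [hstep, ih]
    | pred k ih => rw [← ih, ← hstep (-(k:ℤ) - 1)]; congr 1; ring
  refine ⟨g 0, fun c hc y hy => ?_⟩
  have := hy c hc (perConf u) (perConf_mem_cyl u)
  rw [this]
  exact hconst y
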